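/- Let G be a finite group and A a nontrivial normal subgroup of G such that A/M_G(A) is a nonabelian chief factor of G (i.e., A is narrow with nonabelian simple composition into the top). If K is a normal subgroup of A with A/K a nonabelian simple group, then M_G(A) ≤ K. Consequently A/M_G(A) surjects onto every nonabelian simple quotient of A. -/

import Mathlib

/-- `B` is a `G`-invariant subgroup of `A`: a subgroup of `A` normalized by all of `G`. -/
def IsGInv (G : Type*) [Group G] (A B : Subgroup G) : Prop :=
  B ≤ A ∧ ∀ g : G, ∀ b ∈ B, g * b * g⁻¹ ∈ B

/-- `B` is a maximal proper `G`-invariant subgroup of `A`. -/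
def IsMaxGInv (G : Type*) [Group G] (A B : Subgroup G) : Prop :=
  IsGInv G A B ∧ B < A ∧ ∀ C : Subgroup G, IsGInv G A C → C < A → B ≤ C → B = C

/-- `M_G(A)`: the intersection of all maximal proper `G`-invariant subgroups of `A`. -/
def MG (G : Type*) [Group G] (A : Subgroup G) : Subgroup G :=
  sInf {B | IsMaxGInv G A B}

/-- `B` is a maximal proper normal subgroup of `A` (as subgroups of `G`). -/
def IsMaxNormalIn (G : Type*) [Group G] (A B : Subgroup G) : Prop :=
  (B ≤ A ∧ ∀ a ∈ A, ∀ b ∈ B, a * b * a⁻¹ ∈ B) ∧ B < A ∧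
    ∀ C : Subgroup G, (C ≤ A ∧ ∀ a ∈ A, ∀ c ∈ C, a * c * a⁻¹ ∈ C) → C < A → B ≤ C → B = C

/-- `M(A)`: the Mel'nikov subgroup (cosocle) of `A`, the intersection of all maximal
proper normal subgroups of `A`. -/
def Mel (G : Type*) [Group G] (A : Subgroup G) : Subgroup G :=
  sInf {B | IsMaxNormalIn G A B}

open scoped commutatorElement

private lemma finset_inf_normal {H : Type*} [Group H] {ι : Type*} (s : Finset ι)
    (f : ι → Subgroup H) (hf : ∀ i, (f i).Normal) : (s.inf f).Normal := by
  constructor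
  intro n hn g
  simp only [Finset.inf_eq_iInf, Subgroup.mem_iInf] at hn ⊢
  exact fun i hi => (hf i).conj_mem n (hn i hi) g

private lemma key_step {H : Type*} [Group H] {M K₁ K₂ : Subgroup H}
    [M.Normal] [K₁.Normal] [K₂.Normal]
    (hs : IsSimpleGroup (H ⧸ K₁))
    (hna : ∃ a b : H ⧸ K₁, a * b ≠ b * a)
    (hM : ¬ M ≤ K₁) (h2 : M ⊔ K₂ = ⊤) : M ⊔ (K₁ ⊓ K₂) = ⊤ := by
  by_cases hK : K₂ ≤ K₁
  · rwa [inf_eq_right.mpr hK]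
  · set π := QuotientGroup.mk' K₁ with hπdef
    have hπ : Function.Surjective π := QuotientGroup.mk'_surjective K₁
    have hker : π.ker = K₁ := QuotientGroup.ker_mk' K₁
    have hmapM : M.map π = ⊤ := by
      have hn : (M.map π).Normal := Subgroup.Normal.map ‹M.Normal› π hπ
      rcases hs.eq_bot_or_eq_top_of_normal _ hn with h | h
      · exact absurd (hker ▸ (Subgroup.map_eq_bot_iff M).mp h) hM
      · exact h
    have hmapK₂ : K₂.map π = ⊤ := by
      have hn : (K₂.map π).Normal := Subgroup.Normal.map ‹K₂.Normal› π hπ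
      rcases hs.eq_bot_or_eq_top_of_normal _ hn with h | h
      · exact absurd (hker ▸ (Subgroup.map_eq_bot_iff K₂).mp h) hK
      · exact h
    have hperf : ⁅(⊤ : Subgroup (H ⧸ K₁)), (⊤ : Subgroup (H ⧸ K₁))⁆ = ⊤ := by
      rcases hs.eq_bot_or_eq_top_of_normal ⁅(⊤ : Subgroup (H ⧸ K₁)), (⊤ : Subgroup (H ⧸ K₁))⁆ inferInstance with h | h
      · exfalso
        obtain ⟨a, b, hab⟩ := hna
        have hmem : ⁅a, b⁆ ∈ (⊥ : Subgroup (H ⧸ K₁)) :=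
          h ▸ Subgroup.commutator_mem_commutator (Subgroup.mem_top a) (Subgroup.mem_top b)
        exact hab (commutatorElement_eq_one_iff_mul_comm.mp (Subgroup.mem_bot.mp hmem))
      · exact h
    have h3 : ⁅M, K₂⁆ ⊔ K₁ = ⊤ := by
      have hmapc : (⁅M, K₂⁆).map π = ⊤ := by
        rw [Subgroup.map_commutator, hmapM, hmapK₂, hperf]
      have hc := Subgroup.comap_map_eq π ⁅M, K₂⁆
      rw [hmapc, Subgroup.comap_top, hker] at hc
      exact hc.symm
    have h4 : ⁅M, K₂⁆ ≤ M ⊓ K₂ :=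
      le_inf (Subgroup.commutator_le_left M K₂) (Subgroup.commutator_le_right M K₂)
    have h5 : (M ⊓ K₂) ⊔ K₁ = ⊤ := by
      rw [eq_top_iff, ← h3]
      exact sup_le_sup_right h4 K₁
    rw [eq_top_iff, ← h2, sup_le_iff]
    refine ⟨le_sup_left, fun x hx => ?_⟩
    have hxtop : x ∈ ((M ⊓ K₂) ⊔ K₁ : Subgroup H) := by rw [h5]; exact Subgroup.mem_top x
    rw [← SetLike.mem_coe, Subgroup.mul_normal] at hxtop
    obtain ⟨h, hh, n, hn, rfl⟩ := hxtop
    have hnK₂ : n ∈ K₂ := by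
      have hmem : h⁻¹ * (h * n) ∈ K₂ := mul_mem (inv_mem hh.2) hx
      simpa [mul_assoc] using hmem
    exact mul_mem (Subgroup.mem_sup_left hh.1)
      (Subgroup.mem_sup_right (Subgroup.mem_inf.mpr ⟨hn, hnK₂⟩))

/-- Let `G` be finite and `A` a nontrivial normal subgroup such that `A/M_G(A)` is a
nonabelian chief factor of `G`.  If `K ⊴ A` with `A/K` nonabelian simple, then
`M_G(A) ≤ K`; consequently `A/M_G(A)` surjects onto every nonabelian simple quotient
of `A`. -/
theorem MG_le_of_nonabelian_simple_quotient (G : Type*) [Group G] [Finite G]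
    (A : Subgroup G) [A.Normal] (hnt : A ≠ ⊥)
    (hchief : MG G A < A ∧
      ∀ M : Subgroup G, M.Normal → MG G A < M → M < A → False)
    (hnonab : ∃ x ∈ A, ∃ y ∈ A, ⁅x, y⁆ ∉ MG G A)
    (K : Subgroup A) [K.Normal]
    (hsimple : IsSimpleGroup (A ⧸ K))
    (hKnonab : ∃ a b : A ⧸ K, a * b ≠ b * a) :
    (MG G A).subgroupOf A ≤ K := by
  classical
  haveI := Fintype.ofFinite G
  by_contra hcon
  obtain ⟨m, hmM, hmK⟩ := SetLike.not_le_iff_exists.mp hcon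
  have hMGconj : ∀ g : G, ∀ x ∈ MG G A, g * x * g⁻¹ ∈ MG G A := by
    intro g x hx
    rw [MG, Subgroup.mem_sInf] at hx ⊢
    intro B hB
    exact hB.1.2 g x (hx B hB)
  have hMGle : MG G A ≤ A := hchief.1.le
  set M' : Subgroup ↥A := (MG G A).subgroupOf A with hM'def
  haveI hM'norm : M'.Normal := by
    constructor
    intro n hn a
    simp only [hM'def, Subgroup.mem_subgroupOf] at hn ⊢
    simpa using hMGconj ↑a ↑n hn
  set φ : G →* MulAut ↥A := MulAut.conjNormal with hφdef
  set Kg : G → Subgroup ↥A := fun g => K.map (φ g).toMonoidHom with hKgdef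
  haveI hKgnorm : ∀ g, (Kg g).Normal := fun g =>
    Subgroup.Normal.map ‹K.Normal› _ (MulEquiv.surjective (φ g))
  have hequiv : ∀ g : G, (A ⧸ K) ≃* (↥A ⧸ Kg g) := fun g =>
    QuotientGroup.congr K (Kg g) (φ g) rfl
  haveI := hsimple
  have hKgsimple : ∀ g, IsSimpleGroup (↥A ⧸ Kg g) := by
    intro g
    haveI : Nontrivial (↥A ⧸ Kg g) := (hequiv g).symm.toEquiv.nontrivial
    exact IsSimpleGroup.isSimpleGroup_of_surjective (hequiv g).toMonoidHom
      (hequiv g).surjective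
  have hKgna : ∀ g, ∃ a b : ↥A ⧸ Kg g, a * b ≠ b * a := by
    intro g
    obtain ⟨a, b, hab⟩ := hKnonab
    refine ⟨hequiv g a, hequiv g b, fun h => hab ?_⟩
    rw [← map_mul, ← map_mul] at h
    exact (hequiv g).injective h
  have hM'inv : ∀ g : G, ∀ x : ↥A, x ∈ M' → φ g x ∈ M' := by
    intro g x hx
    simp only [hM'def, Subgroup.mem_subgroupOf] at hx ⊢
    rw [hφdef, MulAut.conjNormal_apply]
    exact hMGconj g ↑x hx
  have hM'nle : ∀ g, ¬ M' ≤ Kg g := by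
    intro g hle
    apply hmK
    have h1 : φ g m ∈ Kg g := hle (hM'inv g m hmM)
    obtain ⟨k, hk, hkm⟩ := h1
    rwa [← (φ g).injective hkm]
  have hM'sup : ∀ s : Finset G, M' ⊔ s.inf Kg = ⊤ := by
    intro s
    induction s using Finset.induction_on with
    | empty => simp
    | @insert a s ha ih =>
      rw [Finset.inf_insert]
      haveI : (s.inf Kg).Normal := finset_inf_normal s Kg hKgnorm
      exact key_step (hKgsimple a) (hKgna a) (hM'nle a) ih
  set D : Subgroup ↥A := Finset.univ.inf Kg with hDdef
  haveI hDnorm : D.Normal := finset_inf_normal _ Kg hKgnorm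
  have hDsup : M' ⊔ D = ⊤ := hM'sup Finset.univ
  set D' : Subgroup G := D.map A.subtype with hD'def
  have hD'le : D' ≤ A := by
    rintro x ⟨y, hy, rfl⟩
    exact y.2
  have hmapTop : Subgroup.map A.subtype (⊤ : Subgroup ↥A) = A := by
    have h1 := Subgroup.subgroupOf_map_subtype A A
    rwa [Subgroup.subgroupOf_self, inf_idem] at h1
  have hMD' : MG G A ⊔ D' = A := by
    have h1 := congrArg (Subgroup.map A.subtype) hDsup
    rwa [Subgroup.map_sup, Subgroup.subgroupOf_map_subtype, inf_eq_left.mpr hMGle,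
      hmapTop] at h1
  have hmemD : ∀ y : ↥A, y ∈ D ↔ ∀ g : G, y ∈ Kg g := by
    intro y
    rw [hDdef, Finset.inf_eq_iInf]
    simp [Subgroup.mem_iInf]
  have hD'inv : IsGInv G A D' := by
    refine ⟨hD'le, fun g b hb => ?_⟩
    obtain ⟨y, hy, rfl⟩ := hb
    have hy' := (hmemD y).mp hy
    have hφy : φ g y ∈ D := by
      rw [hmemD]
      intro g'
      obtain ⟨k, hk, hky⟩ := hy' (g⁻¹ * g')
      refine ⟨k, hk, ?_⟩
      simp only [MulEquiv.coe_toMonoidHom] at hky ⊢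
      rw [← hky, ← MulAut.mul_apply, ← map_mul, mul_inv_cancel_left]
    exact ⟨φ g y, hφy, MulAut.conjNormal_apply g y⟩
  have hD'lt : D' < A := by
    refine lt_of_le_of_ne hD'le fun hEq => ?_
    have hDtop : D = ⊤ := by
      have h1 := Subgroup.comap_map_eq_self_of_injective A.subtype_injective D
      rw [← hD'def, hEq] at h1
      rw [← h1, eq_top_iff]
      intro x _
      exact x.2
    have hK1 : Kg 1 = ⊤ := eq_top_iff.mpr (hDtop ▸ Finset.inf_le (Finset.mem_univ 1))
    apply hmK
    have hmtop : m ∈ Kg 1 := hK1 ▸ Subgroup.mem_top m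
    obtain ⟨k, hk, hkm⟩ := hmtop
    have h2 : (MulEquiv.toMonoidHom (φ 1)) k = k := by simp [hφdef]
    rw [← hkm, h2]
    exact hk
  haveI : Finite (Subgroup G) := inferInstance
  set S : Set (Subgroup G) := {B | IsGInv G A B ∧ B < A ∧ D' ≤ B} with hSdef
  have hSne : S.Nonempty := ⟨D', hD'inv, hD'lt, le_rfl⟩
  obtain ⟨B, hBS, hBmax⟩ := Set.Finite.exists_maximalFor id S (Set.toFinite S) hSne
  have hBmax' : IsMaxGInv G A B :=
    ⟨hBS.1, hBS.2.1, fun C hC hCA hBC => le_antisymm hBC (hBmax ⟨hC, hCA, le_trans hBS.2.2 hBC⟩ hBC)⟩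
  have hMGB : MG G A ≤ B := sInf_le hBmax'
  have hAB : A ≤ B := by
    rw [← hMD']
    exact sup_le hMGB hBS.2.2
  exact absurd hAB hBS.2.1.not_ge
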